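/- Let n ≥ 2, ε > 0, C ≥ 0, and let τ̊ : (0, ε] → ℝ be continuous with |τ̊(s) − (n−1)/s| ≤ C·s for all s ∈ (0, ε]. Define r(s) := ∫_{ε}^{s} exp( −(1/(n−1))·∫_{ε}^{u} τ̊(v) dv ) du for s ∈ (0, ε]. Then there exist constants A ∈ ℝ, B > 0 and C′ ≥ 0 such that |r(s) − A − B·log s| ≤ C′·s² for all s ∈ (0, ε]. In particular r(s) → −∞ as s → 0⁺. -/

import Mathlib

open Set Filter Topology MeasureTheory intervalIntegral

lemma abs_exp_sub_one_le_aux {x M : ℝ} (h : |x| ≤ M) :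
    |Real.exp x - 1| ≤ |x| * Real.exp M := by
  have hM0 : 0 ≤ M := (abs_nonneg x).trans h
  have hexpM : Real.exp x ≤ Real.exp M := Real.exp_le_exp.2 ((le_abs_self x).trans h)
  have h1M : (1:ℝ) ≤ Real.exp M := (Real.one_le_exp hM0)
  rcases le_or_gt 0 x with hx | hx
  · have h1 : 1 ≤ Real.exp x := Real.one_le_exp hx
    have h2 : -x + 1 ≤ Real.exp (-x) := Real.add_one_le_exp (-x)
    have h3 : Real.exp (-x) * Real.exp x = 1 := by
      rw [← Real.exp_add]; simp
    have hpos := Real.exp_pos x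
    rw [abs_of_nonneg (by linarith), abs_of_nonneg hx]
    nlinarith
  · have h2 : x + 1 ≤ Real.exp x := Real.add_one_le_exp x
    have h4 : Real.exp x ≤ 1 := (Real.exp_le_one_iff ..).2 hx.le
    rw [abs_of_nonpos (by linarith), abs_of_neg hx]
    nlinarith

/-- bounded continuous-on functions are integrable on finite-measure intervals -/
lemma integrableOn_Ioc_of_bound {f : ℝ → ℝ} {a b M : ℝ}
    (hf : ContinuousOn f (Ioc a b)) (hM : ∀ x ∈ Ioc a b, |f x| ≤ M) :
    IntegrableOn f (Ioc a b) := by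
  refine ⟨hf.aestronglyMeasurable measurableSet_Ioc, ?_⟩
  refine HasFiniteIntegral.restrict_of_bounded (C := M) measure_Ioc_lt_top ?_
  refine (ae_restrict_iff' measurableSet_Ioc).2 (Filter.Eventually.of_forall ?_)
  intro x hx
  simpa [Real.norm_eq_abs] using hM x hx

theorem vertex_at_minus_infinity_in_Hayward_gauge (n : ℕ) (hn : 2 ≤ n)
    (ε C : ℝ) (hε : 0 < ε) (hC : 0 ≤ C)
    (τO : ℝ → ℝ) (hcont : ContinuousOn τO (Ioc 0 ε))
    (hbd : ∀ s ∈ Ioc 0 ε, |τO s - ((n:ℝ)-1)/s| ≤ C * s)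
    (r : ℝ → ℝ)
    (hr : ∀ s, r s = ∫ u in ε..s, Real.exp (-(1/((n:ℝ)-1)) * ∫ v in ε..u, τO v)) :
    (∃ A B C' : ℝ, 0 < B ∧ 0 ≤ C' ∧
      ∀ s ∈ Ioc 0 ε, |r s - A - B * Real.log s| ≤ C' * s^2) ∧
    Tendsto r (𝓝[>] (0:ℝ)) atBot := by
  set m : ℝ := (n:ℝ) - 1 with hm_def
  have hm0 : 0 < m := by
    have : (2:ℝ) ≤ (n:ℝ) := by exact_mod_cast hn
    simp only [hm_def]; linarith
  set g : ℝ → ℝ := fun v => τO v - m / v with hg_def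
  have hgcont : ContinuousOn g (Ioc 0 ε) :=
    hcont.sub (continuousOn_const.div continuousOn_id fun v hv => ne_of_gt hv.1)
  have hgbd : ∀ v ∈ Ioc 0 ε, |g v| ≤ C * v := hbd
  have hgInt : IntegrableOn g (Ioc 0 ε) :=
    integrableOn_Ioc_of_bound (M := C * ε) hgcont fun v hv =>
      (hgbd v hv).trans (by nlinarith [hv.1, hv.2])
  -- interval integrability of g on subintervals of [0,ε]
  have hsubI : ∀ a b : ℝ, a ∈ Icc 0 ε → b ∈ Icc 0 ε → uIoc a b ⊆ Ioc 0 ε := by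
    intro a b ha hb x hx
    rw [uIoc_eq_union] at hx
    rcases hx with hx | hx
    · exact ⟨lt_of_le_of_lt ha.1 hx.1, hx.2.trans hb.2⟩
    · exact ⟨lt_of_le_of_lt hb.1 hx.1, hx.2.trans ha.2⟩
  have hgI : ∀ a b : ℝ, a ∈ Icc 0 ε → b ∈ Icc 0 ε → IntervalIntegrable g volume a b :=
    fun a b ha hb => (intervalIntegrable_iff).2 (hgInt.mono_set (hsubI a b ha hb))
  set H : ℝ → ℝ := fun u => ∫ v in (0:ℝ)..u, g v with hH_def
  have hHbd : ∀ u ∈ Ioc 0 ε, |H u| ≤ C / 2 * u ^ 2 := by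
    intro u hu
    have hb : IntervalIntegrable (fun v => C * v) volume 0 u :=
      (continuous_const.mul continuous_id).intervalIntegrable 0 u
    have h1 : ‖∫ v in (0:ℝ)..u, g v‖ ≤ |∫ v in (0:ℝ)..u, C * v| := by
      refine intervalIntegral.norm_integral_le_abs_of_norm_le ?_ hb
      refine (ae_restrict_iff' measurableSet_uIoc).2 (Filter.Eventually.of_forall ?_)
      intro v hv
      have hv' : v ∈ Ioc 0 ε := hsubI 0 u ⟨le_rfl, hε.le⟩ ⟨hu.1.le, hu.2⟩ hv
      simpa [Real.norm_eq_abs] using hgbd v hv'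
    have h2 : ∫ v in (0:ℝ)..u, C * v = C * (u ^ 2 / 2) := by
      rw [intervalIntegral.integral_const_mul, integral_id]; ring
    rw [Real.norm_eq_abs] at h1
    calc |H u| ≤ |C * (u ^ 2 / 2)| := by rw [← h2]; exact h1
      _ = C / 2 * u ^ 2 := by
          rw [abs_of_nonneg (by positivity)]; ring
  have hHεIcc : (ε : ℝ) ∈ Icc (0:ℝ) ε := ⟨hε.le, le_rfl⟩
  have hHcont : ContinuousOn H (Icc 0 ε) := by
    have := intervalIntegral.continuousOn_primitive_interval'
      (hgI 0 ε ⟨le_rfl, hε.le⟩ hHεIcc) (by rw [uIcc_of_le hε.le]; exact ⟨le_rfl, hε.le⟩)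
    rwa [uIcc_of_le hε.le] at this
  -- the τ integral formula
  have hτint : ∀ u ∈ Ioc 0 ε,
      (∫ v in ε..u, τO v) = m * (Real.log u - Real.log ε) + (H u - H ε) := by
    intro u hu
    have huI : u ∈ Icc 0 ε := ⟨hu.1.le, hu.2⟩
    have h0 : (0:ℝ) ∉ Set.uIcc ε u := by
      rw [Set.mem_uIcc]; push_neg
      exact ⟨fun h => absurd h (not_le.2 hε), fun h => absurd h (not_le.2 hu.1)⟩
    have hinv : IntervalIntegrable (fun v => m / v) volume ε u := by
      apply ContinuousOn.intervalIntegrable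
      exact continuousOn_const.div continuousOn_id fun v hv => by
        intro h; exact h0 (h ▸ hv)
    have hgluv := hgI ε u hHεIcc huI
    have hsplit : (∫ v in ε..u, τO v) = (∫ v in ε..u, m / v) + ∫ v in ε..u, g v := by
      rw [← intervalIntegral.integral_add hinv hgluv]
      apply intervalIntegral.integral_congr
      intro v _
      simp [hg_def]
    have hinveq : (∫ v in ε..u, m / v) = m * (Real.log u - Real.log ε) := by
      simp_rw [div_eq_mul_inv]
      rw [intervalIntegral.integral_const_mul, integral_inv h0,
        Real.log_div (ne_of_gt hu.1) (ne_of_gt hε)]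
    have hgeq : (∫ v in ε..u, g v) = H u - H ε := by
      have := intervalIntegral.integral_add_adjacent_intervals
        (hgI 0 ε ⟨le_rfl, hε.le⟩ hHεIcc) hgluv
      simp only [hH_def]; linarith [this]
    rw [hsplit, hinveq, hgeq]
  set K : ℝ := Real.exp (H ε / m) with hK_def
  have hK0 : 0 < K := Real.exp_pos _
  -- integrand identity
  have hFeq : ∀ u ∈ Ioc 0 ε,
      Real.exp (-(1/m) * ∫ v in ε..u, τO v)
        = ε * K / u + (ε * K / u) * (Real.exp (-(H u) / m) - 1) := by
    intro u hu
    rw [hτint u hu]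
    have hexp : -(1/m) * (m * (Real.log u - Real.log ε) + (H u - H ε))
        = Real.log ε + (-(Real.log u)) + (H ε / m + -(H u) / m) := by
      field_simp
      ring
    rw [hexp, Real.exp_add, Real.exp_add, Real.exp_add, Real.exp_log hε,
      Real.exp_neg, Real.exp_log hu.1, hK_def]
    field_simp
    ring
  -- bound for ψ
  set M : ℝ := C * ε ^ 2 / (2 * m) with hM_def
  set L : ℝ := ε * K * (C / (2 * m)) * Real.exp M with hL_def
  have hL0 : 0 ≤ L := by positivity
  set ψ : ℝ → ℝ := fun u => (ε * K / u) * (Real.exp (-(H u) / m) - 1) with hψ_def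
  have hψbd : ∀ u ∈ Ioc 0 ε, |ψ u| ≤ L * u := by
    intro u hu
    have hu0 : 0 < u := hu.1
    have hx : |-(H u) / m| ≤ C / 2 * u ^ 2 / m := by
      rw [abs_div, abs_neg, abs_of_pos hm0]
      exact div_le_div_of_nonneg_right (hHbd u hu) hm0.le
    have hu2 : u ^ 2 ≤ ε ^ 2 := by nlinarith [hu.2, hu0]
    have hxM : |-(H u) / m| ≤ M := by
      refine hx.trans ?_
      rw [hM_def, div_le_div_iff₀ hm0 (by positivity)]
      nlinarith [mul_nonneg (mul_nonneg hC (sub_nonneg.2 hu2)) hm0.le]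
    have hexp1 : |Real.exp (-(H u) / m) - 1| ≤ |-(H u) / m| * Real.exp M :=
      abs_exp_sub_one_le_aux hxM
    have hcoef : 0 < ε * K / u := by positivity
    calc |ψ u| = (ε * K / u) * |Real.exp (-(H u) / m) - 1| := by
          rw [hψ_def, abs_mul, abs_of_pos hcoef]
      _ ≤ (ε * K / u) * (|-(H u) / m| * Real.exp M) := by
          exact mul_le_mul_of_nonneg_left hexp1 hcoef.le
      _ ≤ (ε * K / u) * ((C / 2 * u ^ 2 / m) * Real.exp M) := by
          refine mul_le_mul_of_nonneg_left ?_ hcoef.le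
          exact mul_le_mul_of_nonneg_right hx (Real.exp_pos M).le
      _ = L * u := by
          rw [hL_def]
          field_simp
  have hψcont : ContinuousOn ψ (Ioc 0 ε) := by
    apply ContinuousOn.mul
    · exact continuousOn_const.div continuousOn_id fun v hv => ne_of_gt hv.1
    · apply ContinuousOn.sub _ continuousOn_const
      apply Real.continuous_exp.comp_continuousOn
      exact ((hHcont.mono Ioc_subset_Icc_self).neg).div_const m
  have hψInt : IntegrableOn ψ (Ioc 0 ε) :=
    integrableOn_Ioc_of_bound (M := L * ε) hψcont fun u hu =>
      (hψbd u hu).trans (by nlinarith [hu.1, hu.2])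
  have hψI : ∀ a b : ℝ, a ∈ Icc 0 ε → b ∈ Icc 0 ε → IntervalIntegrable ψ volume a b :=
    fun a b ha hb => (intervalIntegrable_iff).2 (hψInt.mono_set (hsubI a b ha hb))
  set Ψ : ℝ → ℝ := fun s => ∫ u in (0:ℝ)..s, ψ u with hΨ_def
  have hΨbd : ∀ s ∈ Ioc 0 ε, |Ψ s| ≤ L / 2 * s ^ 2 := by
    intro s hs
    have hb : IntervalIntegrable (fun u => L * u) volume 0 s :=
      (continuous_const.mul continuous_id).intervalIntegrable 0 s
    have h1 : ‖∫ u in (0:ℝ)..s, ψ u‖ ≤ |∫ u in (0:ℝ)..s, L * u| := by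
      refine intervalIntegral.norm_integral_le_abs_of_norm_le ?_ hb
      refine (ae_restrict_iff' measurableSet_uIoc).2 (Filter.Eventually.of_forall ?_)
      intro u hu
      have hu' : u ∈ Ioc 0 ε := hsubI 0 s ⟨le_rfl, hε.le⟩ ⟨hs.1.le, hs.2⟩ hu
      simpa [Real.norm_eq_abs] using hψbd u hu'
    have h2 : ∫ u in (0:ℝ)..s, L * u = L * (s ^ 2 / 2) := by
      rw [intervalIntegral.integral_const_mul, integral_id]; ring
    rw [Real.norm_eq_abs] at h1
    calc |Ψ s| ≤ |L * (s ^ 2 / 2)| := by rw [← h2]; exact h1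
      _ = L / 2 * s ^ 2 := by rw [abs_of_nonneg (by positivity)]; ring
  -- the formula for r
  have hrs : ∀ s ∈ Ioc 0 ε,
      r s = ε * K * Real.log s + (-(ε * K * Real.log ε) - Ψ ε + Ψ s) := by
    intro s hs
    have hsI : s ∈ Icc 0 ε := ⟨hs.1.le, hs.2⟩
    have h0 : (0:ℝ) ∉ Set.uIcc ε s := by
      rw [Set.mem_uIcc]; push_neg
      exact ⟨fun h => absurd h (not_le.2 hε), fun h => absurd h (not_le.2 hs.1)⟩
    have hinv : IntervalIntegrable (fun u => ε * K / u) volume ε s := by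
      apply ContinuousOn.intervalIntegrable
      exact continuousOn_const.div continuousOn_id fun v hv => by
        intro h; exact h0 (h ▸ hv)
    have hψs := hψI ε s hHεIcc hsI
    have hcongr : r s = (∫ u in ε..s, ε * K / u) + ∫ u in ε..s, ψ u := by
      rw [hr s, ← intervalIntegral.integral_add hinv hψs]
      apply intervalIntegral.integral_congr
      intro u hu
      have hu' : u ∈ Ioc 0 ε := by
        rcases mem_uIcc.1 hu with h | h
        · exact ⟨lt_of_lt_of_le hε h.1, h.2.trans hs.2⟩
        · exact ⟨lt_of_lt_of_le hs.1 h.1, h.2⟩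
      simpa [hψ_def] using hFeq u hu'
    have hinveq : (∫ u in ε..s, ε * K / u) = ε * K * (Real.log s - Real.log ε) := by
      simp_rw [div_eq_mul_inv]
      rw [intervalIntegral.integral_const_mul, integral_inv h0,
        Real.log_div (ne_of_gt hs.1) (ne_of_gt hε)]
    have hψeq : (∫ u in ε..s, ψ u) = Ψ s - Ψ ε := by
      have := intervalIntegral.integral_add_adjacent_intervals
        (hψI 0 ε ⟨le_rfl, hε.le⟩ hHεIcc) hψs
      simp only [hΨ_def]; linarith [this]
    rw [hcongr, hinveq, hψeq]; ring
  refine ⟨⟨-(ε * K * Real.log ε) - Ψ ε, ε * K, L / 2, by positivity, by positivity, ?_⟩, ?_⟩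
  · intro s hs
    have := hrs s hs
    have h2 := hΨbd s hs
    calc |r s - (-(ε * K * Real.log ε) - Ψ ε) - ε * K * Real.log s|
        = |Ψ s| := by rw [this]; ring_nf
      _ ≤ L / 2 * s ^ 2 := h2
  · -- tendsto atBot
    have hub : ∀ᶠ s in 𝓝[>] (0:ℝ), r s ≤
        (-(ε * K * Real.log ε) - Ψ ε + L / 2 * ε ^ 2) + ε * K * Real.log s := by
      filter_upwards [Ioc_mem_nhdsGT hε] with s hs
      have h1 := hrs s hs
      have h2 := hΨbd s hs
      have hs2 : s ^ 2 ≤ ε ^ 2 := by nlinarith [hs.1, hs.2]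
      have h3 : |Ψ s| ≤ L / 2 * ε ^ 2 :=
        h2.trans (by nlinarith [mul_nonneg hL0 (sub_nonneg.2 hs2)])
      have := abs_le.1 h3
      linarith [h1, this.2]
    have hlog : Tendsto (fun s : ℝ =>
        (-(ε * K * Real.log ε) - Ψ ε + L / 2 * ε ^ 2) + ε * K * Real.log s)
        (𝓝[>] (0:ℝ)) atBot := by
      apply tendsto_atBot_add_const_left
      exact Tendsto.const_mul_atBot (by positivity) Real.tendsto_log_nhdsGT_zero
    exact tendsto_atBot_mono' _ hub hlog
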